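/- For any finite convex decomposition of a density matrix ρ = Σ_k p_k ρ_k into density matrices ρ_k with probabilities p_k ≥ 0 summing to 1, the average ergotropy is sandwiched between the ergotropy and the energy of ρ: E(ρ) ≤ Σ_k p_k E(ρ_k) ≤ Tr[Hρ]. -/

import Mathlib

open Matrix
open scoped ComplexOrder

/-- Energy of a state `ρ` with respect to Hamiltonian `H`: `Tr[Hρ]` (real part). -/
noncomputable def energy {d : ℕ} (H ρ : Matrix (Fin d) (Fin d) ℂ) : ℝ :=
  (Matrix.trace (H * ρ)).re

/-- Minimal energy achievable from `ρ` by unitaries (passive-state energy). -/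
noncomputable def passiveEnergy {d : ℕ} (H ρ : Matrix (Fin d) (Fin d) ℂ) : ℝ :=
  sInf {x : ℝ | ∃ U ∈ Matrix.unitaryGroup (Fin d) ℂ, x = energy H (U * ρ * Uᴴ)}

/-- Ergotropy: maximal work extractable by unitaries. -/
noncomputable def ergotropy {d : ℕ} (H ρ : Matrix (Fin d) (Fin d) ℂ) : ℝ :=
  energy H ρ - passiveEnergy H ρ

lemma trace_re_nonneg {d : ℕ} {M : Matrix (Fin d) (Fin d) ℂ} (hM : M.PosSemidef) :
    0 ≤ (Matrix.trace M).re := by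
  rw [Matrix.trace]
  have hdiag : ∀ i, 0 ≤ (M i i).re := by
    intro i
    have h := hM.dotProduct_mulVec_nonneg (Pi.single i 1)
    have : star (Pi.single i 1 : Fin d → ℂ) ⬝ᵥ M.mulVec (Pi.single i 1) = M i i := by
      simp [dotProduct, Matrix.mulVec, Pi.single_apply, Finset.mul_sum,
        apply_ite]
    rw [this] at h
    exact (Complex.le_def.mp h).1
  calc (0:ℝ) ≤ ∑ i, (M i i).re := Finset.sum_nonneg fun i _ => hdiag i
  _ = (∑ i, M i i).re := (Complex.re_sum _ _).symm
  _ = (∑ i, Matrix.diag M i).re := rfl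

lemma energy_nonneg {d : ℕ} {H σ : Matrix (Fin d) (Fin d) ℂ}
    (hH : H.PosSemidef) (hσ : σ.PosSemidef) : 0 ≤ energy H σ := by
  obtain ⟨B, rfl⟩ : ∃ B : Matrix (Fin d) (Fin d) ℂ, H = Bᴴ * B := by
    open scoped MatrixOrder in
    simpa only [Matrix.star_eq_conjTranspose] using CStarAlgebra.nonneg_iff_eq_star_mul_self.mp hH.nonneg
  unfold energy
  rw [Matrix.trace_mul_cycle, Matrix.trace_mul_cycle σ Bᴴ B]
  exact trace_re_nonneg (hσ.mul_mul_conjTranspose_same B)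

lemma conj_mem_set {d : ℕ} (H ρ : Matrix (Fin d) (Fin d) ℂ)
    {U : Matrix (Fin d) (Fin d) ℂ} (hU : U ∈ Matrix.unitaryGroup (Fin d) ℂ) :
    energy H (U * ρ * Uᴴ) ∈
      {x : ℝ | ∃ U ∈ Matrix.unitaryGroup (Fin d) ℂ, x = energy H (U * ρ * Uᴴ)} :=
  ⟨U, hU, rfl⟩

lemma set_nonempty {d : ℕ} (H ρ : Matrix (Fin d) (Fin d) ℂ) :
    ({x : ℝ | ∃ U ∈ Matrix.unitaryGroup (Fin d) ℂ, x = energy H (U * ρ * Uᴴ)}).Nonempty := by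
  refine ⟨energy H ρ, 1, Submonoid.one_mem _, ?_⟩
  simp

lemma set_lb {d : ℕ} {H ρ : Matrix (Fin d) (Fin d) ℂ}
    (hH : H.PosSemidef) (hρ : ρ.PosSemidef) :
    ∀ x ∈ {x : ℝ | ∃ U ∈ Matrix.unitaryGroup (Fin d) ℂ, x = energy H (U * ρ * Uᴴ)}, 0 ≤ x := by
  rintro x ⟨U, hU, rfl⟩
  exact energy_nonneg hH (hρ.mul_mul_conjTranspose_same U)

lemma passive_nonneg {d : ℕ} {H ρ : Matrix (Fin d) (Fin d) ℂ}
    (hH : H.PosSemidef) (hρ : ρ.PosSemidef) : 0 ≤ passiveEnergy H ρ :=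
  le_csInf (set_nonempty H ρ) (set_lb hH hρ)

lemma passive_le_conj {d : ℕ} {H ρ : Matrix (Fin d) (Fin d) ℂ}
    (hH : H.PosSemidef) (hρ : ρ.PosSemidef)
    {U : Matrix (Fin d) (Fin d) ℂ} (hU : U ∈ Matrix.unitaryGroup (Fin d) ℂ) :
    passiveEnergy H ρ ≤ energy H (U * ρ * Uᴴ) :=
  csInf_le ⟨0, set_lb hH hρ⟩ (conj_mem_set H ρ hU)

lemma energy_sum {d n : ℕ} (H : Matrix (Fin d) (Fin d) ℂ) (p : Fin n → ℝ)
    (ρ : Fin n → Matrix (Fin d) (Fin d) ℂ) :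
    energy H (∑ k, p k • ρ k) = ∑ k, p k * energy H (ρ k) := by
  unfold energy
  rw [Matrix.mul_sum, Matrix.trace_sum, Complex.re_sum]
  congr 1
  ext k
  rw [Matrix.mul_smul, Matrix.trace_smul, Complex.smul_re, smul_eq_mul]

/-- for any finite convex decomposition of a density matrix, the average
ergotropy is sandwiched between the ergotropy and the energy of the total state.
`H` has smallest eigenvalue `0` (PSD with a nontrivial kernel vector). -/
theorem avg_ergotropy_sandwich {d n : ℕ}
    (H : Matrix (Fin d) (Fin d) ℂ) (hH : H.PosSemidef)
    (v : Fin d → ℂ) (hv : v ≠ 0) (hker : H.mulVec v = 0)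
    (p : Fin n → ℝ) (hp : ∀ k, 0 ≤ p k) (hpsum : ∑ k, p k = 1)
    (ρ : Fin n → Matrix (Fin d) (Fin d) ℂ)
    (hρ : ∀ k, (ρ k).PosSemidef) (htr : ∀ k, (ρ k).trace = 1) :
    ergotropy H (∑ k, p k • ρ k) ≤ ∑ k, p k * ergotropy H (ρ k) ∧
    ∑ k, p k * ergotropy H (ρ k) ≤ energy H (∑ k, p k • ρ k) := by
  have hE := energy_sum H p ρ
  constructor
  · -- convexity: ∑ p_k passive(ρ_k) ≤ passive(∑ p_k ρ_k)
    have hconv : ∑ k, p k * passiveEnergy H (ρ k) ≤ passiveEnergy H (∑ k, p k • ρ k) := by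
      apply le_csInf (set_nonempty H _)
      rintro x ⟨U, hU, rfl⟩
      have hrw : U * (∑ k, p k • ρ k) * Uᴴ = ∑ k, p k • (U * ρ k * Uᴴ) := by
        rw [Matrix.mul_sum, Matrix.sum_mul]
        congr 1; ext k
        rw [Matrix.mul_smul, Matrix.smul_mul]
      rw [hrw, energy_sum]
      apply Finset.sum_le_sum
      intro k _
      exact mul_le_mul_of_nonneg_left (passive_le_conj hH (hρ k) hU) (hp k)
    simp only [ergotropy, mul_sub]
    rw [Finset.sum_sub_distrib, ← hE]
    linarith
  · -- upper bound: ergotropy(ρ_k) ≤ energy(ρ_k)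
    rw [hE]
    apply Finset.sum_le_sum
    intro k _
    apply mul_le_mul_of_nonneg_left _ (hp k)
    unfold ergotropy
    linarith [passive_nonneg hH (hρ k)]
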